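/- Let H₁ ⊂ L(X₁) and H₂ ⊂ L(X₂) be RKHAs with bounded comultiplications Δ₁, Δ₂. Then the Hilbert tensor product H₁ ⊗ H₂, viewed as an RKHS on X₁ × X₂ with kernel sections k_{(x,y)} = k¹_x ⊗ k²_y, is an RKHA: the map k¹_x ⊗ k²_y ↦ (k¹_x ⊗ k²_y) ⊗ (k¹_x ⊗ k²_y) extends to a bounded operator, given by (id ⊗ τ ⊗ id) ∘ (Δ₁ ⊗ Δ₂) where τ is the tensor swap unitary. -/

import Mathlib

open scoped ComplexInnerProductSpace

noncomputable section

/-- An abstract Hilbert tensor product structure: a bilinear map `tmul` whose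
elementary tensors satisfy the inner product identity
`⟪a ⊗ b, c ⊗ d⟫ = ⟪a, c⟫ ⟪b, d⟫` and whose elementary tensors span a dense subspace. -/
structure TensorLike (H K HT : Type*) [NormedAddCommGroup H] [InnerProductSpace ℂ H]
    [NormedAddCommGroup K] [InnerProductSpace ℂ K]
    [NormedAddCommGroup HT] [InnerProductSpace ℂ HT] where
  tmul : H →ₗ[ℂ] K →ₗ[ℂ] HT
  inner_tmul : ∀ (a c : H) (b d : K),
    ⟪tmul a b, tmul c d⟫ = ⟪a, c⟫ * ⟪b, d⟫
  dense_span : Dense (Submodule.span ℂ (Set.range fun p : H × K => tmul p.1 p.2) : Set HT)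

/-! ### Auxiliary lemmas -/

section Aux

open TensorProduct Matrix
open scoped NNReal

theorem Stmt5.sq_le_imp {a b : ℝ} (ha : 0 ≤ a) (hb : 0 ≤ b) (h : a ^ 2 ≤ b ^ 2) : a ≤ b := by
  nlinarith

theorem Stmt5.sq_eq_imp {a b : ℝ} (ha : 0 ≤ a) (hb : 0 ≤ b) (h : a ^ 2 = b ^ 2) : a = b :=
  le_antisymm (Stmt5.sq_le_imp ha hb h.le) (Stmt5.sq_le_imp hb ha h.ge)

section InnerHelp

variable {E : Type*} [NormedAddCommGroup E] [InnerProductSpace ℂ E]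

theorem Stmt5.inner_self_re (x : E) : (⟪x, x⟫ : ℂ).re = ‖x‖ ^ 2 := by
  simpa using inner_self_eq_norm_sq (𝕜 := ℂ) x

theorem Stmt5.inner_self_coe (x : E) : (⟪x, x⟫ : ℂ) = ((‖x‖ ^ 2 : ℝ) : ℂ) := by
  apply Complex.ext
  · rw [Complex.ofReal_re]
    exact Stmt5.inner_self_re x
  · rw [Complex.ofReal_im]
    have h := inner_self_im (𝕜 := ℂ) x
    rwa [RCLike.im_to_complex] at h

theorem Stmt5.norm_sum_sq {ι : Type*} (s : Finset ι) (v : ι → E) :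
    ‖∑ i ∈ s, v i‖ ^ 2 = (∑ i ∈ s, ∑ j ∈ s, (⟪v i, v j⟫ : ℂ)).re := by
  rw [← Stmt5.inner_self_re]
  congr 1
  rw [sum_inner]
  exact Finset.sum_congr rfl fun i _ => inner_sum _ _ _

end InnerHelp

/-- Two continuous maps that agree on a set with dense span, and are compatible with the
linear structure in the same way, agree everywhere. -/
theorem Stmt5.eq_on_dense_span {E F : Type*} [NormedAddCommGroup E] [NormedSpace ℂ E]
    [TopologicalSpace F] [T2Space F]
    {s : Set E} (hs : Dense (Submodule.span ℂ s : Set E)) {f g : E → F}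
    (hf : Continuous f) (hg : Continuous g)
    (h0 : f 0 = g 0)
    (hadd : ∀ x y, f x = g x → f y = g y → f (x + y) = g (x + y))
    (hsmul : ∀ (c : ℂ) x, f x = g x → f (c • x) = g (c • x))
    (hgen : ∀ x ∈ s, f x = g x) (x : E) : f x = g x := by
  have hA : ∀ y ∈ Submodule.span ℂ s, f y = g y := by
    intro y hy
    induction hy using Submodule.span_induction with
    | mem z hz => exact hgen _ hz
    | zero => exact h0
    | add u v _ _ hu hv => exact hadd _ _ hu hv
    | smul c u _ hu => exact hsmul c u hu
  have hx : x ∈ closure {y | f y = g y} :=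
    closure_mono (fun y hy => hA y hy) (hs x)
  exact (isClosed_eq hf hg).closure_subset hx

namespace TensorLike

variable {H K HT : Type*} [NormedAddCommGroup H] [InnerProductSpace ℂ H]
    [NormedAddCommGroup K] [InnerProductSpace ℂ K]
    [NormedAddCommGroup HT] [InnerProductSpace ℂ HT]

theorem span_le_range (t : TensorLike H K HT) :
    Submodule.span ℂ (Set.range fun p : H × K => t.tmul p.1 p.2)
      ≤ LinearMap.range (TensorProduct.lift t.tmul) :=
  Submodule.span_le.2 (by
    rintro _ ⟨p, rfl⟩
    exact ⟨p.1 ⊗ₜ p.2, by simp⟩)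

theorem dense_range (t : TensorLike H K HT) :
    Dense ((LinearMap.range (TensorProduct.lift t.tmul) : Submodule ℂ HT) : Set HT) :=
  t.dense_span.mono fun x hx => t.span_le_range hx

/-- Uniqueness: two continuous linear maps agreeing on elementary tensors agree. -/
theorem clm_ext (t : TensorLike H K HT) {E : Type*} [NormedAddCommGroup E] [NormedSpace ℂ E]
    {M M' : HT →L[ℂ] E} (h : ∀ a b, M (t.tmul a b) = M' (t.tmul a b)) : M = M' :=
  ContinuousLinearMap.ext_on t.dense_span (by rintro _ ⟨p, rfl⟩; exact h p.1 p.2)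

/-- Comparing inner products of two lifted bilinear maps. -/
theorem inner_lift_eq {M N : Type*} [AddCommGroup M] [Module ℂ M] [AddCommGroup N] [Module ℂ N]
    {E F : Type*} [NormedAddCommGroup E] [InnerProductSpace ℂ E]
    [NormedAddCommGroup F] [InnerProductSpace ℂ F]
    (φ : M →ₗ[ℂ] N →ₗ[ℂ] E) (ψ : M →ₗ[ℂ] N →ₗ[ℂ] F) (γ : ℂ)
    (h : ∀ a b c d, (⟪φ a b, φ c d⟫ : ℂ) = γ * ⟪ψ a b, ψ c d⟫) (z w : M ⊗[ℂ] N) :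
    (⟪TensorProduct.lift φ z, TensorProduct.lift φ w⟫ : ℂ)
      = γ * ⟪TensorProduct.lift ψ z, TensorProduct.lift ψ w⟫ := by
  induction z using TensorProduct.induction_on with
  | zero => simp
  | tmul a b =>
    induction w using TensorProduct.induction_on with
    | zero => simp
    | tmul c d => simpa using h a b c d
    | add x y hx hy =>
      simp only [_root_.map_add, inner_add_right, hx, hy, mul_add]
  | add x y hx hy =>
    simp only [_root_.map_add, inner_add_left, hx, hy, mul_add]

/-- The fundamental extension lemma: a bilinear map on `H × K` which is bounded by `C`
relative to the tensor structure extends to a bounded operator on `HT` of norm at most `C`. -/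
theorem exists_extension {E : Type*} [NormedAddCommGroup E] [NormedSpace ℂ E] [CompleteSpace E]
    (t : TensorLike H K HT) (φ : H →ₗ[ℂ] K →ₗ[ℂ] E) {C : ℝ} (hC : 0 ≤ C)
    (hbound : ∀ z : H ⊗[ℂ] K,
      ‖TensorProduct.lift φ z‖ ≤ C * ‖TensorProduct.lift t.tmul z‖) :
    ∃ M : HT →L[ℂ] E, (∀ a b, M (t.tmul a b) = φ a b) ∧ ‖M‖ ≤ C := by
  set T : H ⊗[ℂ] K →ₗ[ℂ] HT := TensorProduct.lift t.tmul with hT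
  set Φ : H ⊗[ℂ] K →ₗ[ℂ] E := TensorProduct.lift φ with hΦ
  have hker : LinearMap.ker T ≤ LinearMap.ker Φ := by
    intro z hz
    rw [LinearMap.mem_ker] at hz ⊢
    have h := hbound z
    rw [hz, norm_zero, mul_zero] at h
    exact norm_le_zero_iff.1 h
  set p : Submodule ℂ HT := LinearMap.range T with hp
  have hdense : Dense (p : Set HT) := t.dense_range
  set U₀ : p →ₗ[ℂ] E :=
    ((LinearMap.ker T).liftQ Φ hker).comp T.quotKerEquivRange.symm.toLinearMap with hU₀def
  have hU₀ : ∀ (z : H ⊗[ℂ] K) (hz : T z ∈ p), U₀ ⟨T z, hz⟩ = Φ z := by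
    intro z hz
    have h1 : T.quotKerEquivRange.symm ⟨T z, hz⟩ = Submodule.Quotient.mk z := by
      have := T.quotKerEquivRange_symm_apply_image z ⟨z, rfl⟩
      simpa using this
    simp only [hU₀def, LinearMap.comp_apply, LinearEquiv.coe_toLinearMap, h1,
      Submodule.liftQ_apply]
  have hU₀norm : ∀ x : p, ‖U₀ x‖ ≤ C * ‖x‖ := by
    rintro ⟨x, hx⟩
    obtain ⟨z, rfl⟩ := hx
    calc ‖U₀ ⟨T z, ⟨z, rfl⟩⟩‖ = ‖Φ z‖ := by rw [hU₀ z ⟨z, rfl⟩]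
      _ ≤ C * ‖T z‖ := hbound z
  set U₁ : p →L[ℂ] E := U₀.mkContinuous C hU₀norm with hU₁
  set e : p →L[ℂ] HT := p.subtypeL with he
  have hre : Set.range e = (p : Set HT) := by
    rw [show ⇑e = (Subtype.val : p → HT) from rfl]
    exact Subtype.range_coe
  have hdr : DenseRange e := by rw [DenseRange, hre]; exact hdense
  have hiso : Isometry e := fun x y => rfl
  have hui : IsUniformInducing e := hiso.isUniformInducing
  have hb1 : ∀ x : p, ‖x‖ ≤ ((1 : ℝ≥0) : ℝ) * ‖e x‖ := by
    intro x
    rw [NNReal.coe_one, one_mul]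
    exact le_of_eq rfl
  refine ⟨U₁.extend e, ?_, ?_⟩
  · intro a b
    have hmem : t.tmul a b ∈ p := ⟨a ⊗ₜ b, by simp [hT]⟩
    have h1 : e ⟨t.tmul a b, hmem⟩ = t.tmul a b := rfl
    rw [← h1, ContinuousLinearMap.extend_eq U₁ hdr hui]
    have h2 : (⟨t.tmul a b, hmem⟩ : p) = ⟨T (a ⊗ₜ b), ⟨a ⊗ₜ b, rfl⟩⟩ :=
      Subtype.ext (by simp [hT])
    have h3 : U₁ ⟨t.tmul a b, hmem⟩ = U₀ ⟨t.tmul a b, hmem⟩ := rfl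
    rw [h3, h2, hU₀ (a ⊗ₜ b) ⟨a ⊗ₜ b, rfl⟩]
    simp [hΦ]
  · have hle := U₁.opNorm_extend_le hdr hb1
    refine le_trans (le_trans (le_of_eq rfl) hle) ?_
    rw [NNReal.coe_one, one_mul]
    exact U₀.mkContinuous_norm_le hC hU₀norm

/-- The full inner product identity for a continuous bilinear map defined on two
tensor-like spaces, extended by density from elementary tensors. -/
theorem clm2_inner_eq {Ha Ka Ta Hb Kb Tb E : Type*}
    [NormedAddCommGroup Ha] [InnerProductSpace ℂ Ha]
    [NormedAddCommGroup Ka] [InnerProductSpace ℂ Ka]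
    [NormedAddCommGroup Ta] [InnerProductSpace ℂ Ta]
    [NormedAddCommGroup Hb] [InnerProductSpace ℂ Hb]
    [NormedAddCommGroup Kb] [InnerProductSpace ℂ Kb]
    [NormedAddCommGroup Tb] [InnerProductSpace ℂ Tb]
    [NormedAddCommGroup E] [InnerProductSpace ℂ E]
    (ta : TensorLike Ha Ka Ta) (tb : TensorLike Hb Kb Tb)
    (Θ : Ta →L[ℂ] Tb →L[ℂ] E)
    (h : ∀ a b c d a' b' c' d',
      (⟪Θ (ta.tmul a b) (tb.tmul c d), Θ (ta.tmul a' b') (tb.tmul c' d')⟫ : ℂ)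
        = ⟪ta.tmul a b, ta.tmul a' b'⟫ * ⟪tb.tmul c d, tb.tmul c' d'⟫) :
    ∀ s w s' w', (⟪Θ s w, Θ s' w'⟫ : ℂ) = ⟪s, s'⟫ * ⟪w, w'⟫ := by
  have h2 : ∀ a b c d a' b' (w' : Tb),
      (⟪Θ (ta.tmul a b) (tb.tmul c d), Θ (ta.tmul a' b') w'⟫ : ℂ)
        = ⟪ta.tmul a b, ta.tmul a' b'⟫ * ⟪tb.tmul c d, w'⟫ := by
    intro a b c d a' b'
    refine Stmt5.eq_on_dense_span
      (f := fun w' => (⟪Θ (ta.tmul a b) (tb.tmul c d), Θ (ta.tmul a' b') w'⟫ : ℂ))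
      (g := fun w' => ⟪ta.tmul a b, ta.tmul a' b'⟫ * ⟪tb.tmul c d, w'⟫)
      tb.dense_span ?_ ?_ ?_ ?_ ?_ ?_
    · exact Continuous.inner continuous_const ((Θ (ta.tmul a' b')).continuous)
    · exact continuous_const.mul (Continuous.inner continuous_const continuous_id)
    · simp
    · intro x y hx hy
      simp only [_root_.map_add, inner_add_right, mul_add, hx, hy]
    · intro c x hx
      simp only [_root_.map_smul, inner_smul_right, hx]; ring
    · rintro _ ⟨q, rfl⟩; exact h a b c d a' b' q.1 q.2
  have h3 : ∀ a b c d (s' : Ta) (w' : Tb),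
      (⟪Θ (ta.tmul a b) (tb.tmul c d), Θ s' w'⟫ : ℂ)
        = ⟪ta.tmul a b, s'⟫ * ⟪tb.tmul c d, w'⟫ := by
    intro a b c d s' w'
    refine Stmt5.eq_on_dense_span
      (f := fun s' => (⟪Θ (ta.tmul a b) (tb.tmul c d), Θ s' w'⟫ : ℂ))
      (g := fun s' => ⟪ta.tmul a b, s'⟫ * ⟪tb.tmul c d, w'⟫)
      ta.dense_span ?_ ?_ ?_ ?_ ?_ ?_ s'
    · exact Continuous.inner continuous_const
        ((ContinuousLinearMap.flip Θ w').continuous)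
    · exact (Continuous.inner continuous_const continuous_id).mul continuous_const
    · simp
    · intro x y hx hy
      simp only [_root_.map_add, ContinuousLinearMap.add_apply, inner_add_right, add_mul, hx, hy]
    · intro c x hx
      simp only [_root_.map_smul, ContinuousLinearMap.smul_apply, inner_smul_right, hx]; ring
    · rintro _ ⟨q, rfl⟩; exact h2 a b c d q.1 q.2 w'
  have h4 : ∀ a b (w : Tb) (s' : Ta) (w' : Tb),
      (⟪Θ (ta.tmul a b) w, Θ s' w'⟫ : ℂ) = ⟪ta.tmul a b, s'⟫ * ⟪w, w'⟫ := by
    intro a b w s' w'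
    refine Stmt5.eq_on_dense_span
      (f := fun w => (⟪Θ (ta.tmul a b) w, Θ s' w'⟫ : ℂ))
      (g := fun w => ⟪ta.tmul a b, s'⟫ * ⟪w, w'⟫)
      tb.dense_span ?_ ?_ ?_ ?_ ?_ ?_ w
    · exact Continuous.inner ((Θ (ta.tmul a b)).continuous) continuous_const
    · exact continuous_const.mul (Continuous.inner continuous_id continuous_const)
    · simp
    · intro x y hx hy
      simp only [_root_.map_add, inner_add_left, mul_add, hx, hy]
    · intro c x hx
      simp only [_root_.map_smul, inner_smul_left, hx]; ring
    · rintro _ ⟨q, rfl⟩; exact h3 a b q.1 q.2 s' w'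
  intro s w s' w'
  refine Stmt5.eq_on_dense_span
    (f := fun s => (⟪Θ s w, Θ s' w'⟫ : ℂ))
    (g := fun s => ⟪s, s'⟫ * ⟪w, w'⟫)
    ta.dense_span ?_ ?_ ?_ ?_ ?_ ?_ s
  · exact Continuous.inner ((ContinuousLinearMap.flip Θ w).continuous) continuous_const
  · exact (Continuous.inner continuous_id continuous_const).mul continuous_const
  · simp
  · intro x y hx hy
    simp only [_root_.map_add, ContinuousLinearMap.add_apply, inner_add_left, add_mul, hx, hy]
  · intro c x hx
    simp only [_root_.map_smul, ContinuousLinearMap.smul_apply, inner_smul_left, hx]; ring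
  · rintro _ ⟨q, rfl⟩; exact h4 q.1 q.2 w s' w'

end TensorLike

/-! ### Matrix positivity lemmas -/

section Matrices

open scoped ComplexOrder

set_option maxHeartbeats 1000000 in
/-- The sum of all entries of the Hadamard product of two positive semidefinite
complex matrices is nonnegative (a form of the Schur product theorem). -/
theorem Stmt5.sum_hadamard_nonneg {ι : Type*} [Fintype ι] [DecidableEq ι]
    {P Q : Matrix ι ι ℂ} (hP : P.PosSemidef) (hQ : Q.PosSemidef) :
    0 ≤ ∑ i, ∑ j, P i j * Q i j := by
  have h := (hP.hadamard hQ).dotProduct_mulVec_nonneg (fun _ => 1)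
  simpa [dotProduct, Matrix.mulVec, Matrix.hadamard_apply] using h

variable {ι : Type*} [Fintype ι] {E : Type*} [NormedAddCommGroup E] [InnerProductSpace ℂ E]

theorem Stmt5.quad_expand (f : ι → ι → ℂ) (x : ι → ℂ) :
    dotProduct (star x) ((Matrix.of f) *ᵥ x) = ∑ i, ∑ j, star (x i) * f i j * x j := by
  simp only [dotProduct, Matrix.mulVec, Pi.star_apply, Matrix.of_apply, Finset.mul_sum]
  exact Finset.sum_congr rfl fun i _ => Finset.sum_congr rfl fun j _ => by ring

theorem Stmt5.gram_quad (v : ι → E) (x : ι → ℂ) :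
    ∑ i, ∑ j, star (x i) * (⟪v i, v j⟫ : ℂ) * x j = ⟪∑ i, x i • v i, ∑ j, x j • v j⟫ := by
  rw [sum_inner]
  refine Finset.sum_congr rfl fun i _ => ?_
  rw [inner_smul_left, inner_sum, Finset.mul_sum]
  refine Finset.sum_congr rfl fun j _ => ?_
  rw [inner_smul_right]
  simp only [RCLike.star_def]
  ring

theorem Stmt5.gram_posSemidef (v : ι → E) :
    Matrix.PosSemidef (Matrix.of fun i j => (⟪v i, v j⟫ : ℂ)) := by
  refine Matrix.PosSemidef.of_dotProduct_mulVec_nonneg ?_ ?_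
  · ext i j
    simp only [Matrix.conjTranspose_apply, Matrix.of_apply, RCLike.star_def, inner_conj_symm]
  · intro x
    rw [Stmt5.quad_expand, Stmt5.gram_quad, Stmt5.inner_self_coe]
    exact Complex.zero_le_real.2 (by positivity)

theorem Stmt5.gram_smul_posSemidef (c : ℝ) (hc : 0 ≤ c) (v : ι → E) :
    Matrix.PosSemidef (Matrix.of fun i j => (c : ℂ) * ⟪v i, v j⟫) := by
  refine Matrix.PosSemidef.of_dotProduct_mulVec_nonneg ?_ ?_
  · ext i j
    simp only [Matrix.conjTranspose_apply, Matrix.of_apply, RCLike.star_def, _root_.map_mul,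
      Complex.conj_ofReal, inner_conj_symm]
  · intro x
    rw [Stmt5.quad_expand]
    have hfac : ∑ i, ∑ j, star (x i) * ((c : ℂ) * ⟪v i, v j⟫) * x j
        = (c : ℂ) * ∑ i, ∑ j, star (x i) * (⟪v i, v j⟫ : ℂ) * x j := by
      rw [Finset.mul_sum]
      refine Finset.sum_congr rfl fun i _ => ?_
      rw [Finset.mul_sum]
      exact Finset.sum_congr rfl fun j _ => by ring
    rw [hfac, Stmt5.gram_quad, Stmt5.inner_self_coe, ← Complex.ofReal_mul]
    exact Complex.zero_le_real.2 (by positivity)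

theorem Stmt5.gram_op_sub_posSemidef {H T : Type*} [NormedAddCommGroup H]
    [InnerProductSpace ℂ H] [NormedAddCommGroup T] [InnerProductSpace ℂ T]
    (Δ : H →L[ℂ] T) (v : ι → H) :
    Matrix.PosSemidef (Matrix.of fun i j =>
      ((‖Δ‖ ^ 2 : ℝ) : ℂ) * ⟪v i, v j⟫ - ⟪Δ (v i), Δ (v j)⟫) := by
  refine Matrix.PosSemidef.of_dotProduct_mulVec_nonneg ?_ ?_
  · ext i j
    simp only [Matrix.conjTranspose_apply, Matrix.of_apply, RCLike.star_def, _root_.map_sub, _root_.map_mul,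
      Complex.conj_ofReal, inner_conj_symm]
  · intro x
    rw [Stmt5.quad_expand]
    have hsplit : ∑ i, ∑ j,
          star (x i) * (((‖Δ‖ ^ 2 : ℝ) : ℂ) * ⟪v i, v j⟫ - ⟪Δ (v i), Δ (v j)⟫) * x j
        = ((‖Δ‖ ^ 2 : ℝ) : ℂ) * (∑ i, ∑ j, star (x i) * (⟪v i, v j⟫ : ℂ) * x j)
          - ∑ i, ∑ j, star (x i) * (⟪Δ (v i), Δ (v j)⟫ : ℂ) * x j := by
      rw [Finset.mul_sum, ← Finset.sum_sub_distrib]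
      refine Finset.sum_congr rfl fun i _ => ?_
      rw [Finset.mul_sum, ← Finset.sum_sub_distrib]
      exact Finset.sum_congr rfl fun j _ => by ring
    rw [hsplit, Stmt5.gram_quad, Stmt5.gram_quad (fun i => Δ (v i)) x]
    have hΔu : ∑ i, x i • Δ (v i) = Δ (∑ i, x i • v i) := by
      rw [_root_.map_sum]
      exact Finset.sum_congr rfl fun i _ => (_root_.map_smul Δ (x i) (v i)).symm
    rw [hΔu]
    set u := ∑ i, x i • v i
    rw [Stmt5.inner_self_coe, Stmt5.inner_self_coe, ← Complex.ofReal_mul,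
      ← Complex.ofReal_sub]
    refine Complex.zero_le_real.2 ?_
    have h := Δ.le_opNorm u
    nlinarith [norm_nonneg (Δ u), norm_nonneg u, norm_nonneg Δ]

/-- The key Gram matrix inequality: composing with bounded operators scales the
summed Hadamard product of Gram matrices by at most the squared norms. -/
theorem Stmt5.gram_op_le {ι : Type*} [Fintype ι] [DecidableEq ι]
    {H₁ H₂ T₁ T₂ : Type*} [NormedAddCommGroup H₁] [InnerProductSpace ℂ H₁]
    [NormedAddCommGroup H₂] [InnerProductSpace ℂ H₂]
    [NormedAddCommGroup T₁] [InnerProductSpace ℂ T₁]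
    [NormedAddCommGroup T₂] [InnerProductSpace ℂ T₂]
    (Δ₁ : H₁ →L[ℂ] T₁) (Δ₂ : H₂ →L[ℂ] T₂) (a : ι → H₁) (b : ι → H₂) :
    (∑ i, ∑ j, (⟪Δ₁ (a i), Δ₁ (a j)⟫ : ℂ) * ⟪Δ₂ (b i), Δ₂ (b j)⟫)
      ≤ ((‖Δ₁‖ ^ 2 * ‖Δ₂‖ ^ 2 : ℝ) : ℂ) * ∑ i, ∑ j, ⟪a i, a j⟫ * ⟪b i, b j⟫ := by
  rw [← sub_nonneg]
  have hexp : ((‖Δ₁‖ ^ 2 * ‖Δ₂‖ ^ 2 : ℝ) : ℂ) * (∑ i, ∑ j, (⟪a i, a j⟫ : ℂ) * ⟪b i, b j⟫)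
      - ∑ i, ∑ j, (⟪Δ₁ (a i), Δ₁ (a j)⟫ : ℂ) * ⟪Δ₂ (b i), Δ₂ (b j)⟫
    = (∑ i, ∑ j,
        (Matrix.of fun i j => ((‖Δ₁‖ ^ 2 : ℝ) : ℂ) * ⟪a i, a j⟫ - ⟪Δ₁ (a i), Δ₁ (a j)⟫) i j
          * (Matrix.of fun i j => ((‖Δ₂‖ ^ 2 : ℝ) : ℂ) * ⟪b i, b j⟫) i j)
      + ∑ i, ∑ j,
        (Matrix.of fun i j => (⟪Δ₁ (a i), Δ₁ (a j)⟫ : ℂ)) i j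
          * (Matrix.of fun i j =>
              ((‖Δ₂‖ ^ 2 : ℝ) : ℂ) * ⟪b i, b j⟫ - ⟪Δ₂ (b i), Δ₂ (b j)⟫) i j := by
    rw [Finset.mul_sum, ← Finset.sum_add_distrib, ← Finset.sum_sub_distrib]
    refine Finset.sum_congr rfl fun i _ => ?_
    rw [Finset.mul_sum, ← Finset.sum_add_distrib, ← Finset.sum_sub_distrib]
    refine Finset.sum_congr rfl fun j _ => ?_
    simp only [Matrix.of_apply]
    push_cast
    ring
  rw [hexp]
  exact add_nonneg
    (Stmt5.sum_hadamard_nonneg (Stmt5.gram_op_sub_posSemidef Δ₁ a)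
      (Stmt5.gram_smul_posSemidef _ (by positivity) b))
    (Stmt5.sum_hadamard_nonneg (Stmt5.gram_posSemidef _)
      (Stmt5.gram_op_sub_posSemidef Δ₂ b))

end Matrices

end Aux

/-! ### The main theorem -/

open TensorProduct in
/-- the Hilbert tensor product of two RKHAs is an RKHA: the map
`k¹_x ⊗ k²_y ↦ (k¹_x ⊗ k²_y) ⊗ (k¹_x ⊗ k²_y)` extends to a bounded operator
(of norm at most `‖Δ₁‖ ‖Δ₂‖`, coming from `(id ⊗ τ ⊗ id)(Δ₁ ⊗ Δ₂)`). -/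
theorem stmt_5 {X₁ X₂ H₁ H₂ T₁ T₂ H₁₂ HT : Type*}
    [NormedAddCommGroup H₁] [InnerProductSpace ℂ H₁] [CompleteSpace H₁]
    [NormedAddCommGroup H₂] [InnerProductSpace ℂ H₂] [CompleteSpace H₂]
    [NormedAddCommGroup T₁] [InnerProductSpace ℂ T₁] [CompleteSpace T₁]
    [NormedAddCommGroup T₂] [InnerProductSpace ℂ T₂] [CompleteSpace T₂]
    [NormedAddCommGroup H₁₂] [InnerProductSpace ℂ H₁₂] [CompleteSpace H₁₂]
    [NormedAddCommGroup HT] [InnerProductSpace ℂ HT] [CompleteSpace HT]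
    (k₁ : X₁ → H₁) (k₂ : X₂ → H₂)
    (t₁ : TensorLike H₁ H₁ T₁) (t₂ : TensorLike H₂ H₂ T₂)
    (Δ₁ : H₁ →L[ℂ] T₁) (hΔ₁ : ∀ x, Δ₁ (k₁ x) = t₁.tmul (k₁ x) (k₁ x))
    (Δ₂ : H₂ →L[ℂ] T₂) (hΔ₂ : ∀ y, Δ₂ (k₂ y) = t₂.tmul (k₂ y) (k₂ y))
    (t₁₂ : TensorLike H₁ H₂ H₁₂) (tt : TensorLike H₁₂ H₁₂ HT) :
    ∃ Δ : H₁₂ →L[ℂ] HT,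
      (∀ x y, Δ (t₁₂.tmul (k₁ x) (k₂ y)) =
        tt.tmul (t₁₂.tmul (k₁ x) (k₂ y)) (t₁₂.tmul (k₁ x) (k₂ y))) ∧
      ‖Δ‖ ≤ ‖Δ₁‖ * ‖Δ₂‖ := by
  classical
  -- Step A: for each pair `(a, b) : H₁ × H₁`, construct the operator
  -- `G a b : T₂ →L HT` with `G a b (c ⊗ d) = (a ⊗ c) ⊗ (b ⊗ d)`.
  have hGex : ∀ a b : H₁, ∃ M : T₂ →L[ℂ] HT,
      (∀ c d, M (t₂.tmul c d) = tt.tmul (t₁₂.tmul a c) (t₁₂.tmul b d)) ∧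
      ‖M‖ ≤ ‖a‖ * ‖b‖ := by
    intro a b
    set φab : H₂ →ₗ[ℂ] H₂ →ₗ[ℂ] HT := LinearMap.mk₂ ℂ
      (fun c d => tt.tmul (t₁₂.tmul a c) (t₁₂.tmul b d))
      (fun c c' d => by simp [_root_.map_add])
      (fun r c d => by simp [_root_.map_smul])
      (fun c d d' => by simp [_root_.map_add])
      (fun r c d => by simp [_root_.map_smul]) with hφab
    have hinner : ∀ c d c' d', (⟪φab c d, φab c' d'⟫ : ℂ)
        = ((‖a‖ : ℂ) ^ 2 * (‖b‖ : ℂ) ^ 2) * ⟪t₂.tmul c d, t₂.tmul c' d'⟫ := by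
      intro c d c' d'
      simp only [hφab, LinearMap.mk₂_apply]
      rw [tt.inner_tmul, t₁₂.inner_tmul, t₁₂.inner_tmul, t₂.inner_tmul,
        Stmt5.inner_self_coe, Stmt5.inner_self_coe]
      push_cast
      ring
    refine t₂.exists_extension φab (by positivity) ?_
    intro z
    have hz := TensorLike.inner_lift_eq φab t₂.tmul ((‖a‖ : ℂ) ^ 2 * (‖b‖ : ℂ) ^ 2) hinner z z
    have hnorm : ‖TensorProduct.lift φab z‖ ^ 2
        = (‖a‖ * ‖b‖ * ‖TensorProduct.lift t₂.tmul z‖) ^ 2 := by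
      rw [← Stmt5.inner_self_re, hz, Stmt5.inner_self_coe]
      rw [show ((‖a‖ : ℂ) ^ 2 * (‖b‖ : ℂ) ^ 2)
            * (((‖TensorProduct.lift t₂.tmul z‖ ^ 2 : ℝ)) : ℂ)
          = (((‖a‖ * ‖b‖ * ‖TensorProduct.lift t₂.tmul z‖) ^ 2 : ℝ) : ℂ) by push_cast; ring]
      rw [Complex.ofReal_re]
    exact Stmt5.sq_le_imp (norm_nonneg _) (by positivity) (le_of_eq hnorm)
  choose G hG hGnorm using hGex
  -- Step A2: `G` is bilinear.
  have hGaddl : ∀ a a' b, G (a + a') b = G a b + G a' b := by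
    intro a a' b
    refine t₂.clm_ext fun c d => ?_
    simp [hG, _root_.map_add, ContinuousLinearMap.add_apply, LinearMap.add_apply]
  have hGsmull : ∀ (r : ℂ) a b, G (r • a) b = r • G a b := by
    intro r a b
    refine t₂.clm_ext fun c d => ?_
    simp [hG, _root_.map_smul, ContinuousLinearMap.smul_apply, LinearMap.smul_apply]
  have hGaddr : ∀ a b b', G a (b + b') = G a b + G a b' := by
    intro a b b'
    refine t₂.clm_ext fun c d => ?_
    simp [hG, _root_.map_add, ContinuousLinearMap.add_apply, LinearMap.add_apply]
  have hGsmulr : ∀ (r : ℂ) a b, G a (r • b) = r • G a b := by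
    intro r a b
    refine t₂.clm_ext fun c d => ?_
    simp [hG, _root_.map_smul, ContinuousLinearMap.smul_apply, LinearMap.smul_apply]
  set ψ₁ : H₁ →ₗ[ℂ] H₁ →ₗ[ℂ] (T₂ →L[ℂ] HT) := LinearMap.mk₂ ℂ G
    (fun a a' b => hGaddl a a' b)
    (fun r a b => hGsmull r a b)
    (fun a b b' => hGaddr a b b')
    (fun r a b => hGsmulr r a b) with hψ₁
  set Ψ₁ : H₁ ⊗[ℂ] H₁ →ₗ[ℂ] (T₂ →L[ℂ] HT) := TensorProduct.lift ψ₁ with hΨ₁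
  set Tone : H₁ ⊗[ℂ] H₁ →ₗ[ℂ] T₁ := TensorProduct.lift t₁.tmul with hTone
  set Ttwo : H₂ ⊗[ℂ] H₂ →ₗ[ℂ] T₂ := TensorProduct.lift t₂.tmul with hTtwo
  -- Step B : the four-fold inner product identity for `Ψ₁`.
  have hpure : ∀ (a b a' b' : H₁) (c d c' d' : H₂),
      (⟪Ψ₁ (a ⊗ₜ[ℂ] b) (Ttwo (c ⊗ₜ[ℂ] d)), Ψ₁ (a' ⊗ₜ[ℂ] b') (Ttwo (c' ⊗ₜ[ℂ] d'))⟫ : ℂ)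
        = ⟪Tone (a ⊗ₜ[ℂ] b), Tone (a' ⊗ₜ[ℂ] b')⟫ * ⟪Ttwo (c ⊗ₜ[ℂ] d), Ttwo (c' ⊗ₜ[ℂ] d')⟫ := by
    intro a b a' b' c d c' d'
    simp only [hΨ₁, hTone, hTtwo, TensorProduct.lift.tmul, hψ₁, LinearMap.mk₂_apply]
    rw [hG, hG, tt.inner_tmul, t₁₂.inner_tmul, t₁₂.inner_tmul, t₁.inner_tmul, t₂.inner_tmul]
    ring
  have st1 : ∀ (z : H₁ ⊗[ℂ] H₁) (a' b' : H₁) (c d c' d' : H₂),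
      (⟪Ψ₁ z (Ttwo (c ⊗ₜ[ℂ] d)), Ψ₁ (a' ⊗ₜ[ℂ] b') (Ttwo (c' ⊗ₜ[ℂ] d'))⟫ : ℂ)
        = ⟪Tone z, Tone (a' ⊗ₜ[ℂ] b')⟫ * ⟪Ttwo (c ⊗ₜ[ℂ] d), Ttwo (c' ⊗ₜ[ℂ] d')⟫ := by
    intro z
    induction z using TensorProduct.induction_on with
    | zero => intro a' b' c d c' d'; simp
    | tmul a b => intro a' b' c d c' d'; exact hpure a b a' b' c d c' d'
    | add x y hx hy =>
      intro a' b' c d c' d'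
      simp only [_root_.map_add, ContinuousLinearMap.add_apply, inner_add_left, add_mul]
      rw [hx, hy]
      try ring
  have st2 : ∀ (z z' : H₁ ⊗[ℂ] H₁) (c d c' d' : H₂),
      (⟪Ψ₁ z (Ttwo (c ⊗ₜ[ℂ] d)), Ψ₁ z' (Ttwo (c' ⊗ₜ[ℂ] d'))⟫ : ℂ)
        = ⟪Tone z, Tone z'⟫ * ⟪Ttwo (c ⊗ₜ[ℂ] d), Ttwo (c' ⊗ₜ[ℂ] d')⟫ := by
    intro z z'
    induction z' using TensorProduct.induction_on with
    | zero => intro c d c' d'; simp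
    | tmul a' b' => intro c d c' d'; exact st1 z a' b' c d c' d'
    | add x y hx hy =>
      intro c d c' d'
      simp only [_root_.map_add, ContinuousLinearMap.add_apply, inner_add_right, mul_add]
      rw [hx, hy]
      try ring
  have st3 : ∀ (u : H₂ ⊗[ℂ] H₂) (z z' : H₁ ⊗[ℂ] H₁) (c' d' : H₂),
      (⟪Ψ₁ z (Ttwo u), Ψ₁ z' (Ttwo (c' ⊗ₜ[ℂ] d'))⟫ : ℂ)
        = ⟪Tone z, Tone z'⟫ * ⟪Ttwo u, Ttwo (c' ⊗ₜ[ℂ] d')⟫ := by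
    intro u
    induction u using TensorProduct.induction_on with
    | zero => intro z z' c' d'; simp
    | tmul c d => intro z z' c' d'; exact st2 z z' c d c' d'
    | add x y hx hy =>
      intro z z' c' d'
      simp only [_root_.map_add, inner_add_left, mul_add]
      rw [hx, hy]
      try ring
  have st4 : ∀ (u u' : H₂ ⊗[ℂ] H₂) (z z' : H₁ ⊗[ℂ] H₁),
      (⟪Ψ₁ z (Ttwo u), Ψ₁ z' (Ttwo u')⟫ : ℂ)
        = ⟪Tone z, Tone z'⟫ * ⟪Ttwo u, Ttwo u'⟫ := by
    intro u u'
    induction u' using TensorProduct.induction_on with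
    | zero => intro z z'; simp
    | tmul c' d' => intro z z'; exact st3 u z z' c' d'
    | add x y hx hy =>
      intro z z'
      simp only [_root_.map_add, inner_add_right, mul_add]
      rw [hx, hy]
      try ring
  -- Step B2: `‖Ψ₁ z‖ ≤ ‖Tone z‖`, and extend to get `Θ`.
  have hΘex : ∃ Θ : T₁ →L[ℂ] (T₂ →L[ℂ] HT),
      (∀ a b, Θ (t₁.tmul a b) = G a b) ∧ ‖Θ‖ ≤ 1 := by
    refine t₁.exists_extension ψ₁ zero_le_one ?_
    intro z
    rw [one_mul]
    refine ContinuousLinearMap.opNorm_le_bound _ (norm_nonneg _) ?_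
    intro w
    have hsp : ∀ w' ∈ Submodule.span ℂ (Set.range fun p : H₂ × H₂ => t₂.tmul p.1 p.2),
        ‖TensorProduct.lift ψ₁ z w'‖ ≤ ‖Tone z‖ * ‖w'‖ := by
      intro w' hw'
      obtain ⟨u, rfl⟩ := t₂.span_le_range hw'
      have hnormeq : ‖Ψ₁ z (Ttwo u)‖ ^ 2 = (‖Tone z‖ * ‖Ttwo u‖) ^ 2 := by
        rw [← Stmt5.inner_self_re, st4 u u z z, Stmt5.inner_self_coe,
          Stmt5.inner_self_coe]
        rw [show (((‖Tone z‖ ^ 2 : ℝ)) : ℂ) * (((‖Ttwo u‖ ^ 2 : ℝ)) : ℂ)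
            = (((‖Tone z‖ * ‖Ttwo u‖) ^ 2 : ℝ) : ℂ) by push_cast; ring]
        rw [Complex.ofReal_re]
      have := Stmt5.sq_eq_imp (norm_nonneg _) (by positivity) hnormeq
      rw [← hΨ₁, ← hTtwo]
      exact le_of_eq this
    have hmem : w ∈ closure
        {w' : T₂ | ‖TensorProduct.lift ψ₁ z w'‖ ≤ ‖Tone z‖ * ‖w'‖} := by
      refine closure_mono (fun y hy => hsp y hy) (t₂.dense_span w)
    have hcl : IsClosed {w' : T₂ | ‖TensorProduct.lift ψ₁ z w'‖ ≤ ‖Tone z‖ * ‖w'‖} :=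
      isClosed_le ((TensorProduct.lift ψ₁ z).continuous.norm)
        (continuous_const.mul continuous_norm)
    exact hcl.closure_subset hmem
  obtain ⟨Θ, hΘ, -⟩ := hΘex
  -- The full inner product identity for `Θ`.
  have hΘpure : ∀ (a b : H₁) (c d : H₂) (a' b' : H₁) (c' d' : H₂),
      (⟪Θ (t₁.tmul a b) (t₂.tmul c d), Θ (t₁.tmul a' b') (t₂.tmul c' d')⟫ : ℂ)
        = ⟪t₁.tmul a b, t₁.tmul a' b'⟫ * ⟪t₂.tmul c d, t₂.tmul c' d'⟫ := by
    intro a b c d a' b' c' d'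
    rw [hΘ, hΘ, hG, hG, tt.inner_tmul, t₁₂.inner_tmul, t₁₂.inner_tmul,
      t₁.inner_tmul, t₂.inner_tmul]
    ring
  have hΘinner := TensorLike.clm2_inner_eq t₁ t₂ Θ hΘpure
  -- Step C: the final bilinear map and its bound.
  set φ : H₁ →ₗ[ℂ] H₂ →ₗ[ℂ] HT := LinearMap.mk₂ ℂ
    (fun a b => Θ (Δ₁ a) (Δ₂ b))
    (fun a a' b => by simp [_root_.map_add, ContinuousLinearMap.add_apply])
    (fun r a b => by simp [_root_.map_smul, ContinuousLinearMap.smul_apply])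
    (fun a b b' => by simp [_root_.map_add])
    (fun r a b => by simp [_root_.map_smul]) with hφdef
  have hbound : ∀ z : H₁ ⊗[ℂ] H₂,
      ‖TensorProduct.lift φ z‖ ≤ (‖Δ₁‖ * ‖Δ₂‖) * ‖TensorProduct.lift t₁₂.tmul z‖ := by
    intro z
    obtain ⟨S, hS⟩ := TensorProduct.exists_finset z
    subst hS
    have hΦval : TensorProduct.lift φ (∑ p ∈ S, p.1 ⊗ₜ[ℂ] p.2)
        = ∑ p ∈ S, Θ (Δ₁ p.1) (Δ₂ p.2) := by
      rw [_root_.map_sum]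
      exact Finset.sum_congr rfl fun p _ => by
        simp [hφdef, TensorProduct.lift.tmul]
    have hTval : TensorProduct.lift t₁₂.tmul (∑ p ∈ S, p.1 ⊗ₜ[ℂ] p.2)
        = ∑ p ∈ S, t₁₂.tmul p.1 p.2 := by
      rw [_root_.map_sum]
      exact Finset.sum_congr rfl fun p _ => by simp [TensorProduct.lift.tmul]
    rw [hΦval, hTval]
    have h1 : ‖∑ p ∈ S, Θ (Δ₁ p.1) (Δ₂ p.2)‖ ^ 2
        = (∑ p ∈ S, ∑ q ∈ S, (⟪Δ₁ p.1, Δ₁ q.1⟫ : ℂ) * ⟪Δ₂ p.2, Δ₂ q.2⟫).re := by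
      rw [Stmt5.norm_sum_sq]
      congr 1
      exact Finset.sum_congr rfl fun p _ => Finset.sum_congr rfl fun q _ =>
        hΘinner (Δ₁ p.1) (Δ₂ p.2) (Δ₁ q.1) (Δ₂ q.2)
    have h2 : ‖∑ p ∈ S, t₁₂.tmul p.1 p.2‖ ^ 2
        = (∑ p ∈ S, ∑ q ∈ S, (⟪p.1, q.1⟫ : ℂ) * ⟪p.2, q.2⟫).re := by
      rw [Stmt5.norm_sum_sq]
      congr 1
      exact Finset.sum_congr rfl fun p _ => Finset.sum_congr rfl fun q _ =>
        t₁₂.inner_tmul p.1 q.1 p.2 q.2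
    -- pass to sums over the subtype to apply the Gram inequality
    have hgram := Stmt5.gram_op_le (ι := ↥S) Δ₁ Δ₂ (fun i => (i : H₁ × H₂).1)
      (fun i => (i : H₁ × H₂).2)
    have hc1 : (∑ i : ↥S, ∑ j : ↥S,
          (⟪Δ₁ (i : H₁ × H₂).1, Δ₁ (j : H₁ × H₂).1⟫ : ℂ)
            * ⟪Δ₂ (i : H₁ × H₂).2, Δ₂ (j : H₁ × H₂).2⟫)
        = ∑ p ∈ S, ∑ q ∈ S, (⟪Δ₁ p.1, Δ₁ q.1⟫ : ℂ) * ⟪Δ₂ p.2, Δ₂ q.2⟫ := by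
      rw [Finset.sum_coe_sort S (fun p => ∑ q ∈ S, (⟪Δ₁ p.1, Δ₁ q.1⟫ : ℂ) * ⟪Δ₂ p.2, Δ₂ q.2⟫)
        |>.symm]
      exact Finset.sum_congr rfl fun i _ =>
        (Finset.sum_coe_sort S fun q => (⟪Δ₁ (i : H₁ × H₂).1, Δ₁ q.1⟫ : ℂ)
          * ⟪Δ₂ (i : H₁ × H₂).2, Δ₂ q.2⟫)
    have hc2 : (∑ i : ↥S, ∑ j : ↥S,
          (⟪(i : H₁ × H₂).1, (j : H₁ × H₂).1⟫ : ℂ) * ⟪(i : H₁ × H₂).2, (j : H₁ × H₂).2⟫)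
        = ∑ p ∈ S, ∑ q ∈ S, (⟪p.1, q.1⟫ : ℂ) * ⟪p.2, q.2⟫ := by
      rw [Finset.sum_coe_sort S (fun p => ∑ q ∈ S, (⟪p.1, q.1⟫ : ℂ) * ⟪p.2, q.2⟫) |>.symm]
      exact Finset.sum_congr rfl fun i _ =>
        (Finset.sum_coe_sort S fun q => (⟪(i : H₁ × H₂).1, q.1⟫ : ℂ)
          * ⟪(i : H₁ × H₂).2, q.2⟫)
    rw [hc1, hc2] at hgram
    have hre : (∑ p ∈ S, ∑ q ∈ S, (⟪Δ₁ p.1, Δ₁ q.1⟫ : ℂ) * ⟪Δ₂ p.2, Δ₂ q.2⟫).re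
        ≤ (‖Δ₁‖ ^ 2 * ‖Δ₂‖ ^ 2)
          * (∑ p ∈ S, ∑ q ∈ S, (⟪p.1, q.1⟫ : ℂ) * ⟪p.2, q.2⟫).re := by
      have := (Complex.le_def.1 hgram).1
      rwa [Complex.mul_re, Complex.ofReal_re, Complex.ofReal_im, zero_mul, sub_zero] at this
    have hsq : ‖∑ p ∈ S, Θ (Δ₁ p.1) (Δ₂ p.2)‖ ^ 2
        ≤ ((‖Δ₁‖ * ‖Δ₂‖) * ‖∑ p ∈ S, t₁₂.tmul p.1 p.2‖) ^ 2 := by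
      rw [h1]
      calc (∑ p ∈ S, ∑ q ∈ S, (⟪Δ₁ p.1, Δ₁ q.1⟫ : ℂ) * ⟪Δ₂ p.2, Δ₂ q.2⟫).re
          ≤ (‖Δ₁‖ ^ 2 * ‖Δ₂‖ ^ 2)
            * (∑ p ∈ S, ∑ q ∈ S, (⟪p.1, q.1⟫ : ℂ) * ⟪p.2, q.2⟫).re := hre
        _ = ((‖Δ₁‖ * ‖Δ₂‖) * ‖∑ p ∈ S, t₁₂.tmul p.1 p.2‖) ^ 2 := by
            rw [← h2]; ring
    exact Stmt5.sq_le_imp (norm_nonneg _) (by positivity) hsq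
  obtain ⟨Δ, hΔval, hΔnorm⟩ := t₁₂.exists_extension φ
    (mul_nonneg (norm_nonneg _) (norm_nonneg _)) hbound
  refine ⟨Δ, ?_, hΔnorm⟩
  intro x y
  rw [hΔval (k₁ x) (k₂ y)]
  simp only [hφdef, LinearMap.mk₂_apply]
  rw [hΔ₁ x, hΔ₂ y, hΘ, hG]
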